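/- In the three-agent Hylland–Zeckhauser example there is no Walrasian (0-slack) equilibrium: there is no pair (x, p) with p ∈ ℝ²_{≥0} and x_1, x_2, x_3 ∈ Δ_- such that, for each i, x_i maximizes u_i over {z ∈ Δ_- : p · z ≤ p · ω_i}, and x_1 + x_2 + x_3 = (1, 2). -/
import Mathlib


/-- Utilities in the Hylland–Zeckhauser example: agents 1 and 2 value object `a`
at 100 and object `b` at 1; agent 3 values `a` at 1 and `b` at 100. -/
noncomputable def uHZ : Fin 3 → (Fin 2 → ℝ) → ℝ :=
  fun i z => if i = 2 then z 0 + 100 * z 1 else 100 * z 0 + z 1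

theorem statement12 :
    ¬ ∃ (x : Fin 3 → Fin 2 → ℝ) (p : Fin 2 → ℝ),
      (∀ l, 0 ≤ p l) ∧
      (∀ i, 0 ≤ x i 0 ∧ 0 ≤ x i 1 ∧ x i 0 + x i 1 ≤ 1) ∧
      (∀ i, p 0 * x i 0 + p 1 * x i 1 ≤ p 0 * (1 / 3) + p 1 * (2 / 3)) ∧
      (∀ i, ∀ z : Fin 2 → ℝ, 0 ≤ z 0 → 0 ≤ z 1 → z 0 + z 1 ≤ 1 →
        p 0 * z 0 + p 1 * z 1 ≤ p 0 * (1 / 3) + p 1 * (2 / 3) →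
        uHZ i z ≤ uHZ i (x i)) ∧
      (x 0 0 + x 1 0 + x 2 0 = 1 ∧ x 0 1 + x 1 1 + x 2 1 = 2) := by
  rintro ⟨x, p, hp, hfeas, hbud, hopt, hsum0, hsum1⟩
  have hp0 := hp 0
  have hp1 := hp 1
  obtain ⟨h00, h01, h0s⟩ := hfeas 0
  obtain ⟨h10, h11, h1s⟩ := hfeas 1
  obtain ⟨h20, h21, h2s⟩ := hfeas 2
  by_cases hpc : p 0 ≤ p 1
  · have ha0 := hopt 0 ![1, 0] (by norm_num) (by norm_num) (by norm_num)
      (by simp; linarith)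
    have ha1 := hopt 1 ![1, 0] (by norm_num) (by norm_num) (by norm_num)
      (by simp; linarith)
    simp [uHZ] at ha0 ha1
    linarith
  · push_neg at hpc
    have ha2 := hopt 2 ![0, 1] (by norm_num) (by norm_num) (by norm_num)
      (by simp; linarith)
    simp [uHZ] at ha2
    have hx21 : x 2 1 = 1 := by linarith
    have hx20 : x 2 0 = 0 := by linarith
    have hb0 := hbud 0
    have hb1 := hbud 1
    have e0 : x 1 0 = 1 - x 0 0 := by linarith
    have e1 : x 1 1 = 1 - x 0 1 := by linarith
    rw [e0, e1] at hb1
    nlinarith [hb0, hb1]
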